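/- For a > 0 and T ∈ ℝ, the spatial average over the slice t = T of a_μa^μ = 9a²·sinh²(3aρ)/(cosh⁴(aT)·cosh⁴(3aρ)) vanishes: lim_{R→∞} (∫₀^R [sinh²(3aρ)/cosh⁴(3aρ)]·cosh^{4/3}(3aρ)·sinh(3aρ) dρ) / (∫₀^R cosh^{4/3}(3aρ)·sinh(3aρ) dρ) = 0. -/

import Mathlib

open Real Filter

lemma cosh_deriv_aux (c x : ℝ) : HasDerivAt (fun R => Real.cosh (c*R)) (c*Real.sinh (c*x)) x := by
  have := (Real.hasDerivAt_cosh (c*x)).comp x ((hasDerivAt_id x).const_mul c)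
  exact this.congr_deriv (by ring)

lemma denom_int (a R : ℝ) (ha : 0 < a) :
    (∫ ρ in (0:ℝ)..R, Real.cosh (3 * a * ρ) ^ ((4:ℝ)/3) * Real.sinh (3 * a * ρ))
      = (Real.cosh (3*a*R) ^ ((7:ℝ)/3) - 1) / (7*a) := by
  have key : ∀ x : ℝ, HasDerivAt (fun R => Real.cosh (3*a*R) ^ ((7:ℝ)/3) / (7*a))
      (Real.cosh (3*a*x) ^ ((4:ℝ)/3) * Real.sinh (3*a*x)) x := by
    intro x
    have h := (((cosh_deriv_aux (3*a) x).rpow_const (p := (7:ℝ)/3)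
      (Or.inl (Real.cosh_pos _).ne'))).div_const (7*a)
    refine h.congr_deriv (Eq.symm ?_)
    rw [show (7:ℝ)/3 - 1 = 4/3 by norm_num]
    field_simp
  rw [intervalIntegral.integral_eq_sub_of_hasDerivAt (fun x _ => key x)]
  · simp [Real.cosh_zero, Real.one_rpow]
    ring
  · apply Continuous.intervalIntegrable
    exact (((Real.continuous_cosh.comp (continuous_const.mul continuous_id)).rpow_const
      (fun x => Or.inr (by norm_num))).mul
      (Real.continuous_sinh.comp (continuous_const.mul continuous_id)))

lemma num_int (a R : ℝ) (ha : 0 < a) :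
    (∫ ρ in (0:ℝ)..R, (Real.sinh (3 * a * ρ) ^ 2 / Real.cosh (3 * a * ρ) ^ 4) *
        (Real.cosh (3 * a * ρ) ^ ((4:ℝ)/3) * Real.sinh (3 * a * ρ)))
      = (Real.cosh (3*a*R) ^ ((1:ℝ)/3) - 1) / a
        + (Real.cosh (3*a*R) ^ (-(5:ℝ)/3) - 1) / (5*a) := by
  have key : ∀ x : ℝ, HasDerivAt
      (fun R => Real.cosh (3*a*R) ^ ((1:ℝ)/3) / a + Real.cosh (3*a*R) ^ (-(5:ℝ)/3) / (5*a))
      ((Real.sinh (3*a*x) ^ 2 / Real.cosh (3*a*x) ^ 4) *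
        (Real.cosh (3*a*x) ^ ((4:ℝ)/3) * Real.sinh (3*a*x))) x := by
    intro x
    have h1 := ((cosh_deriv_aux (3*a) x).rpow_const (p := (1:ℝ)/3)
      (Or.inl (Real.cosh_pos _).ne')).div_const a
    have h2 := ((cosh_deriv_aux (3*a) x).rpow_const (p := -(5:ℝ)/3)
      (Or.inl (Real.cosh_pos _).ne')).div_const (5*a)
    have h := h1.add h2
    refine h.congr_deriv (Eq.symm ?_)
    set u := Real.cosh (3*a*x) with hu
    have hu0 : 0 < u := Real.cosh_pos _
    set s := Real.sinh (3*a*x) with hs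
    have hsq : s ^ 2 = u ^ 2 - 1 := by
      rw [hs, hu, Real.sinh_sq]
    rw [show (1:ℝ)/3 - 1 = (-(8:ℝ)/3) + 2 by norm_num,
        show -(5:ℝ)/3 - 1 = (-(8:ℝ)/3) by norm_num,
        show (4:ℝ)/3 = (-(8:ℝ)/3) + 4 by norm_num,
        Real.rpow_add hu0, Real.rpow_add hu0,
        show ((2:ℝ)) = ((2:ℕ):ℝ) by norm_num,
        show ((4:ℝ)) = ((4:ℕ):ℝ) by norm_num,
        Real.rpow_natCast, Real.rpow_natCast, hsq]
    field_simp
    ring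
  rw [intervalIntegral.integral_eq_sub_of_hasDerivAt (fun x _ => key x)]
  · simp [Real.cosh_zero, Real.one_rpow]
    ring
  · apply Continuous.intervalIntegrable
    have hc : Continuous fun ρ : ℝ => Real.cosh (3*a*ρ) :=
      Real.continuous_cosh.comp (continuous_const.mul continuous_id)
    have hs : Continuous fun ρ : ℝ => Real.sinh (3*a*ρ) :=
      Real.continuous_sinh.comp (continuous_const.mul continuous_id)
    exact ((hs.pow 2).div (hc.pow 4) (fun x => (pow_pos (Real.cosh_pos _) 4).ne')).mul
      ((hc.rpow_const (fun x => Or.inr (by norm_num))).mul hs)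

lemma ratio_tendsto (a : ℝ) (ha : 0 < a) :
    Tendsto (fun u : ℝ =>
      ((u ^ ((1:ℝ)/3) - 1)/a + (u ^ (-(5:ℝ)/3) - 1)/(5*a)) / ((u ^ ((7:ℝ)/3) - 1)/(7*a)))
      atTop (nhds 0) := by
  have p2 : Tendsto (fun u : ℝ => u ^ (-(2:ℝ))) atTop (nhds 0) :=
    tendsto_rpow_neg_atTop (by norm_num)
  have p4 : Tendsto (fun u : ℝ => u ^ (-(4:ℝ))) atTop (nhds 0) :=
    tendsto_rpow_neg_atTop (by norm_num)
  have p73 : Tendsto (fun u : ℝ => u ^ (-(7:ℝ)/3)) atTop (nhds 0) := by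
    have := tendsto_rpow_neg_atTop (y := (7:ℝ)/3) (by norm_num)
    simpa [neg_div] using this
  have hnum : Tendsto (fun u : ℝ =>
      (u ^ (-(2:ℝ)) - u ^ (-(7:ℝ)/3))/a + (u ^ (-(4:ℝ)) - u ^ (-(7:ℝ)/3))/(5*a))
      atTop (nhds 0) := by
    have := ((p2.sub p73).div_const a).add ((p4.sub p73).div_const (5*a))
    simpa using this
  have hden : Tendsto (fun u : ℝ => (1 - u ^ (-(7:ℝ)/3))/(7*a)) atTop (nhds (1/(7*a))) := by
    have := ((tendsto_const_nhds (x := (1:ℝ)) (f := atTop)).sub p73).div_const (7*a)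
    simpa using this
  have hdne : (1:ℝ)/(7*a) ≠ 0 := by positivity
  have hlim := hnum.div hden hdne
  rw [zero_div] at hlim
  refine hlim.congr' ?_
  filter_upwards [eventually_gt_atTop (1:ℝ)] with u hu
  have hu0 : (0:ℝ) < u := lt_trans one_pos hu
  simp only [Pi.div_apply]
  have e1 : u ^ ((1:ℝ)/3) * u ^ (-(7:ℝ)/3) = u ^ (-(2:ℝ)) := by
    rw [← Real.rpow_add hu0]; norm_num
  have e2 : u ^ (-(5:ℝ)/3) * u ^ (-(7:ℝ)/3) = u ^ (-(4:ℝ)) := by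
    rw [← Real.rpow_add hu0]; norm_num
  have e3 : u ^ ((7:ℝ)/3) * u ^ (-(7:ℝ)/3) = 1 := by
    rw [← Real.rpow_add hu0]; norm_num
  have f1 : u ^ (-(2:ℝ)) * u ^ ((7:ℝ)/3) = u ^ ((1:ℝ)/3) := by
    rw [← Real.rpow_add hu0]; norm_num
  have f2 : u ^ (-(4:ℝ)) * u ^ ((7:ℝ)/3) = u ^ (-(5:ℝ)/3) := by
    rw [← Real.rpow_add hu0]; norm_num
  have hlt : u ^ (-(7:ℝ)/3) < 1 := by
    apply Real.rpow_lt_one_of_one_lt_of_neg hu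
    norm_num
  have hgt : (1:ℝ) < u ^ ((7:ℝ)/3) :=
    (Real.one_lt_rpow_iff_of_pos hu0).2 (Or.inl ⟨hu, by norm_num⟩)
  have hd1 : (1 - u ^ (-(7:ℝ)/3))/(7*a) ≠ 0 := by
    apply ne_of_gt; apply div_pos (by linarith) (by positivity)
  have hd2 : (u ^ ((7:ℝ)/3) - 1)/(7*a) ≠ 0 := by
    apply ne_of_gt; apply div_pos (by linarith) (by positivity)
  rw [div_eq_div_iff hd1 hd2]
  linear_combination (5*f1 + f2 + 5*e1 + e2 - 6*e3) / (35*a^2)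


/-- the spatial average of `a_μa^μ ∝ sinh²(3aρ)/cosh⁴(3aρ)` over
the slice `t = T`, with radial volume weight `cosh^{4/3}(3aρ) sinh(3aρ)`,
vanishes. -/
theorem average_acceleration_squared_vanishes (a T : ℝ) (ha : 0 < a) :
    Filter.Tendsto (fun R : ℝ =>
      (∫ ρ in (0:ℝ)..R, (Real.sinh (3 * a * ρ) ^ 2 / Real.cosh (3 * a * ρ) ^ 4) *
        (Real.cosh (3 * a * ρ) ^ ((4:ℝ)/3) * Real.sinh (3 * a * ρ))) /
      (∫ ρ in (0:ℝ)..R,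
        Real.cosh (3 * a * ρ) ^ ((4:ℝ)/3) * Real.sinh (3 * a * ρ)))
      Filter.atTop (nhds 0) := by
  have hcosh : Tendsto Real.cosh atTop atTop := by
    apply tendsto_atTop_mono (fun x => ?_) (Real.tendsto_exp_atTop.atTop_div_const two_pos)
    rw [Real.cosh_eq]
    have := (Real.exp_pos (-x)).le
    linarith
  have hc : Tendsto (fun R : ℝ => Real.cosh (3*a*R)) atTop atTop :=
    hcosh.comp (Tendsto.const_mul_atTop (by positivity) tendsto_id)
  have := (ratio_tendsto a ha).comp hc
  refine this.congr fun R => ?_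
  simp only [Function.comp]
  rw [num_int a R ha, denom_int a R ha]
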